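/- arXiv:2203.01320 — 4 statements merged into one kernel-verified Lean document; each statement's English description precedes it below -/
import Mathlib

section
/- Let P₁, P₂ be basis projections on the self-dual Hilbert space (H, Γ) and let {ψ̃_j}_{j∈J} be an orthonormal basis of the range h_{P₁} of P₁, so that {ψ̃_j}_{j∈J} ∪ {Γψ̃_j}_{j∈J} is an orthonormal basis of H. Then the Hilbert–Schmidt norm of P₁ − P₂ satisfies ‖P₁ − P₂‖²_HS = 2 Σ_{j∈J} ⟨ψ̃_j, (1_H − P₂)ψ̃_j⟩; consequently P₁ − P₂ is Hilbert–Schmidt if, and only if, Σ_{j∈J} ⟨ψ̃_j, (1_H − P₂)ψ̃_j⟩ < ∞. -/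
open scoped ComplexInnerProductSpace ENNReal

noncomputable section

/-- `T` is a Hilbert--Schmidt operator: `Σ_i ‖T ψ_i‖² < ∞` for an (equivalently,
any) orthonormal basis `{ψ_i}` of `H`. -/
def IsHilbertSchmidt {H : Type*} [NormedAddCommGroup H] [InnerProductSpace ℂ H]
    [CompleteSpace H] (T : H →L[ℂ] H) : Prop :=
  ∃ (ι : Type) (b : HilbertBasis ι ℂ H), Summable fun i : ι => ‖T (b i)‖ ^ 2

lemma aux_tsum_sum_type {α β : Type u} (f : α ⊕ β → ℝ≥0∞) :
    ∑' x, f x = ∑' a, f (.inl a) + ∑' b, f (.inr b) := by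
  rw [← (Equiv.sumEquivSigmaBool α β).symm.tsum_eq, ENNReal.tsum_sigma', tsum_fintype]
  simp [Equiv.sumEquivSigmaBool, add_comm]

lemma aux_nnnorm_sq {E : Type*} [NormedAddCommGroup E] (x : E) :
    (‖x‖₊ : ℝ≥0∞) ^ 2 = ENNReal.ofReal (‖x‖ ^ 2) := by
  rw [ENNReal.ofReal_pow (norm_nonneg x), ofReal_norm, enorm_eq_nnnorm]

lemma aux_parseval {H : Type*} [NormedAddCommGroup H] [InnerProductSpace ℂ H] [CompleteSpace H]
    {κ : Type*} (f : HilbertBasis κ ℂ H) (z : H) :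
    ∑' j, (‖⟪f j, z⟫‖₊ : ℝ≥0∞) ^ 2 = (‖z‖₊ : ℝ≥0∞) ^ 2 := by
  have h := f.hasSum_inner_mul_inner z z
  have h2 : HasSum (fun j => ‖⟪f j, z⟫‖ ^ 2) (‖z‖ ^ 2) := by
    have := (Complex.reCLM.hasSum h)
    simp only [Complex.reCLM_apply] at this
    convert this using 2 with j
    · rw [← inner_conj_symm z (f j), RCLike.conj_mul]
      simp [← Complex.ofReal_pow]
    · exact (inner_self_eq_norm_sq (𝕜 := ℂ) z).symm
  calc ∑' j, (‖⟪f j, z⟫‖₊ : ℝ≥0∞) ^ 2 = ∑' j, ENNReal.ofReal (‖⟪f j, z⟫‖ ^ 2) :=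
        tsum_congr fun j => aux_nnnorm_sq _
    _ = ENNReal.ofReal (∑' j, ‖⟪f j, z⟫‖ ^ 2) :=
        (ENNReal.ofReal_tsum_of_nonneg (fun j => sq_nonneg _) h2.summable).symm
    _ = (‖z‖₊ : ℝ≥0∞) ^ 2 := by rw [h2.tsum_eq, ← aux_nnnorm_sq]

lemma aux_parseval' {H : Type*} [NormedAddCommGroup H] [InnerProductSpace ℂ H] [CompleteSpace H]
    {κ : Type*} (f : HilbertBasis κ ℂ H) (z : H) :
    ∑' j, (‖⟪z, f j⟫‖₊ : ℝ≥0∞) ^ 2 = (‖z‖₊ : ℝ≥0∞) ^ 2 := by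
  rw [← aux_parseval f z]
  refine tsum_congr fun j => ?_
  congr 2
  exact NNReal.coe_injective (by simpa using norm_inner_symm (𝕜 := ℂ) z (f j))

lemma aux_hs_adj {H : Type*} [NormedAddCommGroup H] [InnerProductSpace ℂ H] [CompleteSpace H]
    (T : H →L[ℂ] H) {ι κ : Type*} (e : HilbertBasis ι ℂ H) (f : HilbertBasis κ ℂ H) :
    ∑' i, (‖T (e i)‖₊ : ℝ≥0∞) ^ 2 =
      ∑' j, (‖(ContinuousLinearMap.adjoint T) (f j)‖₊ : ℝ≥0∞) ^ 2 := by
  calc ∑' i, (‖T (e i)‖₊ : ℝ≥0∞) ^ 2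
      = ∑' i, ∑' j, (‖⟪f j, T (e i)⟫‖₊ : ℝ≥0∞) ^ 2 := tsum_congr fun i => (aux_parseval f _).symm
    _ = ∑' j, ∑' i, (‖⟪f j, T (e i)⟫‖₊ : ℝ≥0∞) ^ 2 := ENNReal.tsum_comm
    _ = ∑' j, ∑' i, (‖⟪(ContinuousLinearMap.adjoint T) (f j), e i⟫‖₊ : ℝ≥0∞) ^ 2 := by
        refine tsum_congr fun j => tsum_congr fun i => ?_
        rw [ContinuousLinearMap.adjoint_inner_left]
    _ = ∑' j, (‖(ContinuousLinearMap.adjoint T) (f j)‖₊ : ℝ≥0∞) ^ 2 :=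
        tsum_congr fun j => aux_parseval' e _

/-- The Hilbert--Schmidt sum is independent of the choice of Hilbert basis. -/
lemma aux_hs_indep {H : Type*} [NormedAddCommGroup H] [InnerProductSpace ℂ H] [CompleteSpace H]
    (T : H →L[ℂ] H) {ι κ : Type*} (e : HilbertBasis ι ℂ H) (f : HilbertBasis κ ℂ H) :
    ∑' i, (‖T (e i)‖₊ : ℝ≥0∞) ^ 2 = ∑' j, (‖T (f j)‖₊ : ℝ≥0∞) ^ 2 := by
  rw [aux_hs_adj T e e, aux_hs_adj T f e]

lemma aux_countable {H : Type*} [NormedAddCommGroup H] [InnerProductSpace ℂ H] [CompleteSpace H]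
    [TopologicalSpace.SeparableSpace H] {ι : Type*} (b : HilbertBasis ι ℂ H) : Countable ι := by
  have horth := b.orthonormal
  refine Pairwise.countable_of_isOpen_disjoint (s := fun i => Metric.ball (b i) 2⁻¹)
    (fun i j hij => ?_) (fun i => Metric.isOpen_ball) (fun i => ?_)
  · refine Metric.ball_disjoint_ball ?_
    have hin : ⟪b i, b j⟫ = 0 := horth.2 hij
    have hsq : ‖b i - b j‖ ^ 2 = 2 := by
      rw [@norm_sub_sq ℂ]
      simp [horth.1 i, horth.1 j, hin]
      norm_num
    have : (1:ℝ) ≤ ‖b i - b j‖ := by nlinarith [norm_nonneg (b i - b j)]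
    rw [dist_eq_norm]
    linarith
  · exact Metric.nonempty_ball.2 (by norm_num)

noncomputable def aux_reindex {H : Type*} [NormedAddCommGroup H] [InnerProductSpace ℂ H]
    [CompleteSpace H] {ι ι' : Type*} (b : HilbertBasis ι ℂ H) (e : ι' ≃ ι) :
    HilbertBasis ι' ℂ H :=
  HilbertBasis.mk (b.orthonormal.comp e e.injective) (by
    rw [show Set.range (⇑b ∘ ⇑e) = Set.range b from e.surjective.range_comp b]
    exact b.dense_span.ge)

lemma aux_reindex_apply {H : Type*} [NormedAddCommGroup H] [InnerProductSpace ℂ H]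
    [CompleteSpace H] {ι ι' : Type*} (b : HilbertBasis ι ℂ H) (e : ι' ≃ ι) (i' : ι') :
    aux_reindex b e i' = b (e i') := by
  have h := HilbertBasis.coe_mk (b.orthonormal.comp e e.injective)
    (by rw [show Set.range (⇑b ∘ ⇑e) = Set.range b from e.surjective.range_comp b]
        exact b.dense_span.ge)
  exact congrFun h i'

lemma aux_summable_iff {H : Type*} [NormedAddCommGroup H] [InnerProductSpace ℂ H]
    [CompleteSpace H] (T : H →L[ℂ] H) {ι : Type*} (c : HilbertBasis ι ℂ H) :
    (Summable fun i => ‖T (c i)‖ ^ 2) ↔ ∑' i, (‖T (c i)‖₊ : ℝ≥0∞) ^ 2 ≠ ⊤ := by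
  have h1 : (Summable fun i => ‖T (c i)‖ ^ 2) ↔ Summable fun i => ‖T (c i)‖₊ ^ 2 := by
    rw [← NNReal.summable_coe]
    simp [NNReal.coe_pow]
  rw [h1, ← ENNReal.tsum_coe_ne_top_iff_summable]
  simp [ENNReal.coe_pow]

/-- for basis projections `P₁, P₂` on the self-dual Hilbert space
`(H, Γ)` and an orthonormal basis `{ψ̃_j}_{j ∈ J}` of `ran P₁` such that
`{ψ̃_j} ∪ {Γ ψ̃_j}` is an orthonormal basis of `H`, one has
`‖P₁ - P₂‖²_HS = 2 Σ_j ⟨ψ̃_j, (1 - P₂) ψ̃_j⟩`; consequently `P₁ - P₂` is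
Hilbert--Schmidt iff `Σ_j ⟨ψ̃_j, (1 - P₂) ψ̃_j⟩ < ∞`. -/
theorem hs_norm_sq_eq_twice_sum
    {H : Type*} [NormedAddCommGroup H] [InnerProductSpace ℂ H] [CompleteSpace H]
    [TopologicalSpace.SeparableSpace H]
    (Γ : H →ₗ⋆[ℂ] H)
    (hΓΓ : ∀ φ : H, Γ (Γ φ) = φ)
    (hΓinner : ∀ φ ψ : H, ⟪Γ φ, Γ ψ⟫ = ⟪ψ, φ⟫)
    (P₁ P₂ : H →L[ℂ] H)
    (hidem₁ : ∀ ψ : H, P₁ (P₁ ψ) = P₁ ψ)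
    (hsa₁ : ∀ φ ψ : H, ⟪P₁ φ, ψ⟫ = ⟪φ, P₁ ψ⟫)
    (hbp₁ : ∀ ψ : H, Γ (P₁ (Γ ψ)) = ψ - P₁ ψ)
    (hidem₂ : ∀ ψ : H, P₂ (P₂ ψ) = P₂ ψ)
    (hsa₂ : ∀ φ ψ : H, ⟪P₂ φ, ψ⟫ = ⟪φ, P₂ ψ⟫)
    (hbp₂ : ∀ ψ : H, Γ (P₂ (Γ ψ)) = ψ - P₂ ψ)
    {J : Type*} (ψt : J → H)
    (hfix : ∀ j : J, P₁ (ψt j) = ψt j)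
    (b : HilbertBasis (J ⊕ J) ℂ H)
    (hb₁ : ∀ j : J, b (Sum.inl j) = ψt j)
    (hb₂ : ∀ j : J, b (Sum.inr j) = Γ (ψt j)) :
    (∑' i : J ⊕ J, (‖(P₁ - P₂) (b i)‖₊ : ℝ≥0∞) ^ 2) =
        2 * ∑' j : J, ENNReal.ofReal (⟪ψt j, ψt j - P₂ (ψt j)⟫).re ∧
      (IsHilbertSchmidt (P₁ - P₂) ↔
        ∑' j : J, ENNReal.ofReal (⟪ψt j, ψt j - P₂ (ψt j)⟫).re < ⊤) := by
  set T := P₁ - P₂ with hT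
  -- value of T on the two halves of the basis
  have hinner0 : ∀ j : J, ⟪ψt j - P₂ (ψt j), ψt j - P₂ (ψt j)⟫ = ⟪ψt j, ψt j - P₂ (ψt j)⟫ := by
    intro j
    have : ⟪P₂ (ψt j), ψt j - P₂ (ψt j)⟫ = 0 := by
      rw [hsa₂, map_sub, hidem₂, sub_self, inner_zero_right]
    rw [inner_sub_left, this, sub_zero]
  have hl : ∀ j : J, (‖T (b (Sum.inl j))‖₊ : ℝ≥0∞) ^ 2
      = ENNReal.ofReal (⟪ψt j, ψt j - P₂ (ψt j)⟫).re := by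
    intro j
    have hv : T (b (Sum.inl j)) = ψt j - P₂ (ψt j) := by
      rw [hb₁, hT, ContinuousLinearMap.sub_apply, hfix]
    rw [hv, aux_nnnorm_sq, ← inner_self_eq_norm_sq (𝕜 := ℂ), hinner0 j]
    rfl
  have hr : ∀ j : J, (‖T (b (Sum.inr j))‖₊ : ℝ≥0∞) ^ 2
      = ENNReal.ofReal (⟪ψt j, ψt j - P₂ (ψt j)⟫).re := by
    intro j
    have hP₁ : P₁ (Γ (ψt j)) = 0 := by
      have h := hbp₁ (ψt j)
      rw [hfix, sub_self] at h
      have := congrArg Γ h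
      rwa [hΓΓ, map_zero] at this
    have hP₂ : P₂ (Γ (ψt j)) = Γ (ψt j - P₂ (ψt j)) := by
      have h := congrArg Γ (hbp₂ (ψt j))
      rwa [hΓΓ] at h
    have hv : T (b (Sum.inr j)) = -Γ (ψt j - P₂ (ψt j)) := by
      rw [hb₂, hT, ContinuousLinearMap.sub_apply, hP₁, hP₂, zero_sub]
    rw [hv, nnnorm_neg, aux_nnnorm_sq, ← inner_self_eq_norm_sq (𝕜 := ℂ), hΓinner,
      hinner0 j]
    rfl
  have hmain : (∑' i : J ⊕ J, (‖T (b i)‖₊ : ℝ≥0∞) ^ 2)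
      = 2 * ∑' j : J, ENNReal.ofReal (⟪ψt j, ψt j - P₂ (ψt j)⟫).re := by
    rw [aux_tsum_sum_type (fun i => (‖T (b i)‖₊ : ℝ≥0∞) ^ 2)]
    rw [tsum_congr hl, tsum_congr hr, two_mul]
  refine ⟨hmain, ?_⟩
  set S := ∑' j : J, ENNReal.ofReal (⟪ψt j, ψt j - P₂ (ψt j)⟫).re with hS
  constructor
  · rintro ⟨ι₀, c, hc⟩
    have h1 : ∑' i, (‖T (c i)‖₊ : ℝ≥0∞) ^ 2 ≠ ⊤ := (aux_summable_iff T c).mp hc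
    rw [aux_hs_indep T c b, hmain] at h1
    have : S ≤ 2 * S := le_mul_of_one_le_left zero_le (by norm_num)
    exact lt_of_le_of_lt this (lt_top_iff_ne_top.mpr h1)
  · intro hSlt
    have hcnt : Countable (J ⊕ J) := aux_countable b
    obtain ⟨f, hf⟩ := hcnt.exists_injective_nat
    let e : (J ⊕ J) ≃ Set.range f := Equiv.ofInjective f hf
    let c : HilbertBasis (Set.range f) ℂ H := aux_reindex b e.symm
    refine ⟨Set.range f, c, (aux_summable_iff T c).mpr ?_⟩
    have h2 : ∑' i, (‖T (c i)‖₊ : ℝ≥0∞) ^ 2 = 2 * S := by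
      rw [aux_hs_indep T c b, hmain]
    rw [h2]
    exact (ENNReal.mul_lt_top (by norm_num) hSlt).ne
end
end

section
/- Let P₁, P₂ be basis projections on the self-dual Hilbert space (H, Γ), let {ψ̃_j}_{j∈J} be an orthonormal basis of the range of P₁ and {ψ̆_i}_{i∈J} an orthonormal basis of the range of P₂. Then Σ_{j∈J} ⟨ψ̃_j, (1_H − P₂)ψ̃_j⟩ = Σ_{i,j∈J} |⟨ψ̆_i, Γψ̃_j⟩|²; in particular P₁ − P₂ is Hilbert–Schmidt if, and only if, Σ_{i,j∈J} |⟨ψ̆_i, Γψ̃_j⟩|² < ∞. -/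
open scoped ComplexInnerProductSpace ENNReal

noncomputable section

open scoped NNReal

section AuxLemmas
variable {H : Type*} [NormedAddCommGroup H] [InnerProductSpace ℂ H] [CompleteSpace H]

lemma my_tsum_sum_type {J K : Type*} (f : J ⊕ K → ℝ≥0∞) :
    ∑' s, f s = ∑' j, f (Sum.inl j) + ∑' k, f (Sum.inr k) := by
  rw [← Summable.tsum_add_tsum_compl (s := Set.range Sum.inl) ENNReal.summable ENNReal.summable]
  congr 1
  · exact ((Equiv.ofInjective Sum.inl Sum.inl_injective).tsum_eq
      (fun x : Set.range (Sum.inl : J → J ⊕ K) => f x)).symm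
  · rw [Set.compl_range_inl]
    exact ((Equiv.ofInjective Sum.inr Sum.inr_injective).tsum_eq
      (fun x : Set.range (Sum.inr : K → J ⊕ K) => f x)).symm

lemma my_ofReal_sq (x : H) : ENNReal.ofReal (‖x‖ ^ 2) = (‖x‖₊ : ℝ≥0∞) ^ 2 := by
  rw [ENNReal.ofReal_pow (norm_nonneg _), ofReal_norm_eq_enorm]
  rfl

lemma my_hasSum_ofReal {ι : Type*} {f : ι → ℝ} {a : ℝ} (h : HasSum f a) (h0 : ∀ i, 0 ≤ f i) :
    ∑' i, ENNReal.ofReal (f i) = ENNReal.ofReal a := by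
  rw [← ENNReal.ofReal_tsum_of_nonneg h0 h.summable, h.tsum_eq]

lemma my_parseval {ι : Type*} (b : HilbertBasis ι ℂ H) (x : H) :
    ∑' i, (‖⟪b i, x⟫‖₊ : ℝ≥0∞) ^ 2 = (‖x‖₊ : ℝ≥0∞) ^ 2 := by
  have h : HasSum (fun i => ‖⟪b i, x⟫‖ ^ 2) (‖x‖ ^ 2) := by
    have h0 := (b.hasSum_inner_mul_inner x x).mapL Complex.reCLM
    have he : ∀ i : ι, Complex.reCLM (⟪x, b i⟫ * ⟪b i, x⟫) = ‖⟪b i, x⟫‖ ^ 2 := by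
      intro i
      rw [← inner_conj_symm (b i) x, Complex.mul_conj, Complex.reCLM_apply,
        Complex.ofReal_re]
      simp only [Complex.normSq_eq_norm_sq, Complex.norm_conj]
    have hxx : Complex.reCLM ⟪x, x⟫ = ‖x‖ ^ 2 := by
      rw [Complex.reCLM_apply, ← RCLike.re_to_complex]
      exact inner_self_eq_norm_sq x
    simpa only [he, hxx] using h0
  calc ∑' i, (‖⟪b i, x⟫‖₊ : ℝ≥0∞) ^ 2 = ∑' i, ENNReal.ofReal (‖⟪b i, x⟫‖ ^ 2) := by
        simp_rw [my_ofReal_sq]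
  _ = ENNReal.ofReal (‖x‖ ^ 2) := my_hasSum_ofReal h (fun i => sq_nonneg _)
  _ = (‖x‖₊ : ℝ≥0∞) ^ 2 := my_ofReal_sq x

lemma my_nnnorm_inner_symm (x y : H) : ‖⟪x, y⟫‖₊ = ‖⟪y, x⟫‖₊ :=
  NNReal.coe_injective (norm_inner_symm x y)

lemma my_sumsq_indep {ι κ : Type*} (b : HilbertBasis ι ℂ H) (c : HilbertBasis κ ℂ H)
    (T : H →L[ℂ] H) (hsa : ∀ φ ψ : H, ⟪T φ, ψ⟫ = ⟪φ, T ψ⟫) :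
    ∑' i, (‖T (b i)‖₊ : ℝ≥0∞) ^ 2 = ∑' k, (‖T (c k)‖₊ : ℝ≥0∞) ^ 2 := by
  calc ∑' i, (‖T (b i)‖₊ : ℝ≥0∞) ^ 2
      = ∑' i, ∑' k, (‖⟪c k, T (b i)⟫‖₊ : ℝ≥0∞) ^ 2 := by
        simp_rw [my_parseval c]
    _ = ∑' k, ∑' i, (‖⟪c k, T (b i)⟫‖₊ : ℝ≥0∞) ^ 2 := ENNReal.tsum_comm
    _ = ∑' k, ∑' i, (‖⟪b i, T (c k)⟫‖₊ : ℝ≥0∞) ^ 2 := by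
        congr 1; funext k; congr 1; funext i
        rw [my_nnnorm_inner_symm (c k), hsa, my_nnnorm_inner_symm]
    _ = ∑' k, (‖T (c k)‖₊ : ℝ≥0∞) ^ 2 := by
        simp_rw [my_parseval b]

lemma my_countable_of_orthonormal [TopologicalSpace.SeparableSpace H] {ι : Type*} {v : ι → H}
    (hv : Orthonormal ℂ v) : Countable ι := by
  obtain ⟨s, hsc, hsd⟩ := TopologicalSpace.exists_countable_dense H
  have hsel : ∀ i : ι, ∃ y : H, y ∈ s ∧ dist (v i) y < 0.7 := by
    intro i
    rcases Metric.dense_iff.mp hsd (v i) 0.7 (by norm_num) with ⟨y, hy1, hy2⟩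
    exact ⟨y, hy2, by rw [dist_comm]; exact Metric.mem_ball.mp hy1⟩
  choose g hgs hgd using hsel
  have hdist : ∀ i j : ι, i ≠ j → dist (v i) (v j) ^ 2 = 2 := by
    intro i j hij
    rw [dist_eq_norm, @norm_sub_sq ℂ, hv.2 hij, hv.1 i, hv.1 j]
    simp
    norm_num
  have hginj : Function.Injective g := by
    intro i j hgij
    by_contra hij
    have h1 : dist (v i) (v j) ≤ dist (v i) (g i) + dist (g j) (v j) := by
      rw [hgij]; exact dist_triangle _ _ _
    have h2 := hgd i
    have h3 := hgd j
    rw [dist_comm (g j)] at h1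
    have h4 := hdist i j hij
    have h5 : (0:ℝ) ≤ dist (v i) (v j) := dist_nonneg
    nlinarith
  haveI : Countable s := hsc.to_subtype
  exact Function.Injective.countable
    (f := fun i : ι => (⟨g i, hgs i⟩ : s))
    (fun i j h => hginj (congrArg Subtype.val h))

lemma my_extended_basis (Γ : H →ₗ⋆[ℂ] H) (hΓΓ : ∀ φ : H, Γ (Γ φ) = φ)
    (hΓinner : ∀ φ ψ : H, ⟪Γ φ, Γ ψ⟫ = ⟪ψ, φ⟫)
    (P : H →L[ℂ] H)
    (hsa : ∀ φ ψ : H, ⟪P φ, ψ⟫ = ⟪φ, P ψ⟫)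
    (hbp : ∀ ψ : H, Γ (P (Γ ψ)) = ψ - P ψ)
    {J : Type*} (ψ : J → H) (h_on : Orthonormal ℂ ψ) (h_fix : ∀ j, P (ψ j) = ψ j)
    (h_total : (Submodule.span ℂ (Set.range ψ)).topologicalClosure =
      LinearMap.range (P : H →ₗ[ℂ] H)) :
    ∃ b : HilbertBasis (J ⊕ J) ℂ H, ⇑b = Sum.elim ψ (fun j => Γ (ψ j)) := by
  have hPΓ : ∀ j, P (Γ (ψ j)) = 0 := by
    intro j
    have h1 : Γ (P (Γ (ψ j))) = 0 := by rw [hbp, h_fix, sub_self]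
    have h2 := congrArg Γ h1
    rwa [hΓΓ, map_zero] at h2
  have hΓnorm : ∀ x : H, ‖Γ x‖ = ‖x‖ := by
    intro x
    have h2 : ‖Γ x‖ ^ 2 = ‖x‖ ^ 2 := by
      rw [← @inner_self_eq_norm_sq ℂ, ← @inner_self_eq_norm_sq ℂ, hΓinner]
    have h3 := congrArg Real.sqrt h2
    rwa [Real.sqrt_sq (norm_nonneg _), Real.sqrt_sq (norm_nonneg _)] at h3
  set e : J ⊕ J → H := Sum.elim ψ (fun j => Γ (ψ j)) with he
  have h_on_e : Orthonormal ℂ e := by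
    classical
    rw [orthonormal_iff_ite] at h_on ⊢
    rintro (i | i) (j | j)
    · simp only [he, Sum.elim_inl, Sum.inl.injEq]
      exact h_on i j
    · have hz : ⟪ψ i, Γ (ψ j)⟫ = 0 := by
        rw [← h_fix i, hsa, hPΓ, inner_zero_right]
      simpa [he] using hz
    · have hz : ⟪Γ (ψ i), ψ j⟫ = 0 := by
        rw [← inner_conj_symm, ← h_fix j, hsa, hPΓ, inner_zero_right, map_zero]
      simpa [he] using hz
    · simp only [he, Sum.elim_inr, Sum.inr.injEq]
      rw [hΓinner, h_on j i]
      by_cases h : i = j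
      · simp [h]
      · simp [h, Ne.symm h]
  have hΓcont : Continuous Γ := (AddMonoidHomClass.isometry_of_norm Γ hΓnorm).continuous
  have hsub1 : Set.range ψ ⊆ Set.range e := by
    intro x ⟨j, hj⟩; exact ⟨Sum.inl j, hj⟩
  have hmono : (Submodule.span ℂ (Set.range ψ)).topologicalClosure ≤
      (Submodule.span ℂ (Set.range e)).topologicalClosure :=
    Submodule.topologicalClosure_mono (Submodule.span_mono hsub1)
  have hmap : ∀ x, x ∈ (Submodule.span ℂ (Set.range ψ)).topologicalClosure →
      Γ x ∈ (Submodule.span ℂ (Set.range e)).topologicalClosure := by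
    intro x hx
    have hx' : x ∈ closure ((Submodule.span ℂ (Set.range ψ)) : Set H) := hx
    have h1 : Γ x ∈ closure (Γ '' ((Submodule.span ℂ (Set.range ψ)) : Set H)) :=
      image_closure_subset_closure_image hΓcont ⟨x, hx', rfl⟩
    have h2 : Γ '' ((Submodule.span ℂ (Set.range ψ)) : Set H) ⊆
        ((Submodule.span ℂ (Set.range e)) : Set H) := by
      have h3 := Submodule.map_span Γ (Set.range ψ)
      intro y hy
      have hy' : y ∈ Submodule.map Γ (Submodule.span ℂ (Set.range ψ)) := by
        rcases hy with ⟨z, hz, rfl⟩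
        exact ⟨z, hz, rfl⟩
      rw [h3] at hy'
      refine Submodule.span_mono ?_ hy'
      rintro w ⟨z, ⟨j, rfl⟩, rfl⟩
      exact ⟨Sum.inr j, rfl⟩
    have h4 : Γ x ∈ closure ((Submodule.span ℂ (Set.range e) : Set H)) :=
      closure_mono h2 h1
    exact h4
  have h_total_e : ⊤ ≤ (Submodule.span ℂ (Set.range e)).topologicalClosure := by
    intro φ _
    have hPφ : P φ ∈ (Submodule.span ℂ (Set.range e)).topologicalClosure := by
      apply hmono
      rw [h_total]
      exact ⟨φ, rfl⟩
    have hQφ : φ - P φ ∈ (Submodule.span ℂ (Set.range e)).topologicalClosure := by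
      rw [← hbp]
      apply hmap
      rw [h_total]
      exact ⟨Γ φ, rfl⟩
    have := Submodule.add_mem _ hPφ hQφ
    rwa [add_sub_cancel] at this
  exact ⟨HilbertBasis.mk h_on_e h_total_e, HilbertBasis.coe_mk _ _⟩

end AuxLemmas


/-- for basis projections `P₁, P₂` on the self-dual Hilbert space
`(H, Γ)`, an orthonormal basis `{ψ̃_j}_{j∈J}` of `ran P₁` and an orthonormal
basis `{ψ̆_i}_{i∈J}` of `ran P₂`, one has
`Σ_j ⟨ψ̃_j, (1 - P₂) ψ̃_j⟩ = Σ_{i,j} |⟨ψ̆_i, Γ ψ̃_j⟩|²`; consequently `P₁ - P₂`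
is Hilbert--Schmidt iff `Σ_{i,j} |⟨ψ̆_i, Γ ψ̃_j⟩|² < ∞`. -/
theorem sum_eq_double_sum_overlaps
    {H : Type*} [NormedAddCommGroup H] [InnerProductSpace ℂ H] [CompleteSpace H]
    [TopologicalSpace.SeparableSpace H]
    (Γ : H →ₗ⋆[ℂ] H)
    (hΓΓ : ∀ φ : H, Γ (Γ φ) = φ)
    (hΓinner : ∀ φ ψ : H, ⟪Γ φ, Γ ψ⟫ = ⟪ψ, φ⟫)
    (P₁ P₂ : H →L[ℂ] H)
    (hidem₁ : ∀ ψ : H, P₁ (P₁ ψ) = P₁ ψ)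
    (hsa₁ : ∀ φ ψ : H, ⟪P₁ φ, ψ⟫ = ⟪φ, P₁ ψ⟫)
    (hbp₁ : ∀ ψ : H, Γ (P₁ (Γ ψ)) = ψ - P₁ ψ)
    (hidem₂ : ∀ ψ : H, P₂ (P₂ ψ) = P₂ ψ)
    (hsa₂ : ∀ φ ψ : H, ⟪P₂ φ, ψ⟫ = ⟪φ, P₂ ψ⟫)
    (hbp₂ : ∀ ψ : H, Γ (P₂ (Γ ψ)) = ψ - P₂ ψ)
    {J : Type*} (ψt ψb : J → H)
    (hψt_on : Orthonormal ℂ ψt) (hψt_fix : ∀ j : J, P₁ (ψt j) = ψt j)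
    (hψt_total : (Submodule.span ℂ (Set.range ψt)).topologicalClosure =
      LinearMap.range (P₁ : H →ₗ[ℂ] H))
    (hψb_on : Orthonormal ℂ ψb) (hψb_fix : ∀ j : J, P₂ (ψb j) = ψb j)
    (hψb_total : (Submodule.span ℂ (Set.range ψb)).topologicalClosure =
      LinearMap.range (P₂ : H →ₗ[ℂ] H)) :
    (∑' j : J, ENNReal.ofReal (⟪ψt j, ψt j - P₂ (ψt j)⟫).re =
        ∑' p : J × J, (‖⟪ψb p.1, Γ (ψt p.2)⟫‖₊ : ℝ≥0∞) ^ 2) ∧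
      (IsHilbertSchmidt (P₁ - P₂) ↔
        ∑' p : J × J, (‖⟪ψb p.1, Γ (ψt p.2)⟫‖₊ : ℝ≥0∞) ^ 2 < ⊤) := by
  classical
  set T : H →L[ℂ] H := P₁ - P₂ with hT
  set S : ℝ≥0∞ := ∑' p : J × J, (‖⟪ψb p.1, Γ (ψt p.2)⟫‖₊ : ℝ≥0∞) ^ 2 with hSdef
  have hsaT : ∀ φ ψ : H, ⟪T φ, ψ⟫ = ⟪φ, T ψ⟫ := by
    intro φ ψ
    simp only [hT, ContinuousLinearMap.sub_apply, inner_sub_left, inner_sub_right, hsa₁, hsa₂]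
  obtain ⟨bt, hbt⟩ := my_extended_basis Γ hΓΓ hΓinner P₁ hsa₁ hbp₁ ψt hψt_on hψt_fix hψt_total
  obtain ⟨bb, hbb⟩ := my_extended_basis Γ hΓΓ hΓinner P₂ hsa₂ hbp₂ ψb hψb_on hψb_fix hψb_total
  have hΓnorm : ∀ x : H, ‖Γ x‖ = ‖x‖ := by
    intro x
    have h2 : ‖Γ x‖ ^ 2 = ‖x‖ ^ 2 := by
      rw [← @inner_self_eq_norm_sq ℂ, ← @inner_self_eq_norm_sq ℂ, hΓinner]
    have h3 := congrArg Real.sqrt h2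
    rwa [Real.sqrt_sq (norm_nonneg _), Real.sqrt_sq (norm_nonneg _)] at h3
  have hPΓt : ∀ j, P₁ (Γ (ψt j)) = 0 := by
    intro j
    have h1 : Γ (P₁ (Γ (ψt j))) = 0 := by rw [hbp₁, hψt_fix, sub_self]
    have h2 := congrArg Γ h1
    rwa [hΓΓ, map_zero] at h2
  have hPΓb : ∀ j, P₂ (Γ (ψb j)) = 0 := by
    intro j
    have h1 : Γ (P₂ (Γ (ψb j))) = 0 := by rw [hbp₂, hψb_fix, sub_self]
    have h2 := congrArg Γ h1
    rwa [hΓΓ, map_zero] at h2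
  -- Key 1: ‖P₂ φ‖² = Σᵢ |⟨ψb i, φ⟩|²
  have key1 : ∀ φ : H, (‖P₂ φ‖₊ : ℝ≥0∞) ^ 2 = ∑' i : J, (‖⟪ψb i, φ⟫‖₊ : ℝ≥0∞) ^ 2 := by
    intro φ
    rw [← my_parseval bb (P₂ φ), my_tsum_sum_type]
    have h1 : ∑' j : J, (‖⟪bb (Sum.inl j), P₂ φ⟫‖₊ : ℝ≥0∞) ^ 2 =
        ∑' i : J, (‖⟪ψb i, φ⟫‖₊ : ℝ≥0∞) ^ 2 := by
      refine tsum_congr fun i => ?_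
      rw [hbb]
      simp only [Sum.elim_inl]
      rw [← hsa₂, hψb_fix]
    have h2 : ∑' j : J, (‖⟪bb (Sum.inr j), P₂ φ⟫‖₊ : ℝ≥0∞) ^ 2 = 0 := by
      refine (tsum_congr fun i => ?_).trans tsum_zero
      rw [hbb]
      simp only [Sum.elim_inr]
      rw [← hsa₂, hPΓb, inner_zero_left]
      simp
    rw [h1, h2, add_zero]
  -- Key 2: per-term identity for the first statement
  have key2 : ∀ j : J, ENNReal.ofReal (⟪ψt j, ψt j - P₂ (ψt j)⟫).re =
      (‖P₂ (Γ (ψt j))‖₊ : ℝ≥0∞) ^ 2 := by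
    intro j
    have h2 : ⟪ψt j, ψt j - P₂ (ψt j)⟫ = ((‖P₂ (Γ (ψt j))‖ : ℝ) : ℂ) ^ 2 := by
      rw [← hbp₂ (ψt j)]
      calc ⟪ψt j, Γ (P₂ (Γ (ψt j)))⟫
          = ⟪Γ (Γ (ψt j)), Γ (P₂ (Γ (ψt j)))⟫ := by rw [hΓΓ]
        _ = ⟪P₂ (Γ (ψt j)), Γ (ψt j)⟫ := hΓinner _ _
        _ = ⟪P₂ (Γ (ψt j)), P₂ (Γ (ψt j))⟫ := by
            conv_lhs => rw [← hidem₂ (Γ (ψt j))]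
            rw [hsa₂]
        _ = ((‖P₂ (Γ (ψt j))‖ : ℝ) : ℂ) ^ 2 := by
            rw [@inner_self_eq_norm_sq_to_K ℂ]
            norm_cast
    rw [h2, ← Complex.ofReal_pow, Complex.ofReal_re, my_ofReal_sq]
  -- the single sum equals S
  have hS' : ∑' j : J, (‖P₂ (Γ (ψt j))‖₊ : ℝ≥0∞) ^ 2 = S := by
    calc ∑' j : J, (‖P₂ (Γ (ψt j))‖₊ : ℝ≥0∞) ^ 2
        = ∑' j : J, ∑' i : J, (‖⟪ψb i, Γ (ψt j)⟫‖₊ : ℝ≥0∞) ^ 2 := tsum_congr fun j => key1 _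
      _ = ∑' i : J, ∑' j : J, (‖⟪ψb i, Γ (ψt j)⟫‖₊ : ℝ≥0∞) ^ 2 := ENNReal.tsum_comm
      _ = S := ENNReal.tsum_prod.symm
  -- sum of ‖T (bt s)‖² over the extended basis
  have hTsum : ∑' s : J ⊕ J, (‖T (bt s)‖₊ : ℝ≥0∞) ^ 2 =
      2 * ∑' j : J, (‖P₂ (Γ (ψt j))‖₊ : ℝ≥0∞) ^ 2 := by
    rw [my_tsum_sum_type]
    have hl : ∀ j : J, (‖T (bt (Sum.inl j))‖₊ : ℝ≥0∞) = ‖P₂ (Γ (ψt j))‖₊ := by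
      intro j
      rw [hbt]
      simp only [Sum.elim_inl]
      have : T (ψt j) = Γ (P₂ (Γ (ψt j))) := by
        rw [hT, ContinuousLinearMap.sub_apply, hψt_fix, hbp₂]
      rw [this]
      have : ‖Γ (P₂ (Γ (ψt j)))‖₊ = ‖P₂ (Γ (ψt j))‖₊ :=
        NNReal.coe_injective (by simpa using hΓnorm (P₂ (Γ (ψt j))))
      rw [this]
    have hr : ∀ j : J, (‖T (bt (Sum.inr j))‖₊ : ℝ≥0∞) = ‖P₂ (Γ (ψt j))‖₊ := by
      intro j
      rw [hbt]
      simp only [Sum.elim_inr]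
      have : T (Γ (ψt j)) = -(P₂ (Γ (ψt j))) := by
        rw [hT, ContinuousLinearMap.sub_apply, hPΓt, zero_sub]
      rw [this]
      simp
    have e1 : ∑' j : J, (‖T (bt (Sum.inl j))‖₊ : ℝ≥0∞) ^ 2 =
        ∑' j : J, (‖P₂ (Γ (ψt j))‖₊ : ℝ≥0∞) ^ 2 := tsum_congr fun j => by rw [hl j]
    have e2 : ∑' j : J, (‖T (bt (Sum.inr j))‖₊ : ℝ≥0∞) ^ 2 =
        ∑' j : J, (‖P₂ (Γ (ψt j))‖₊ : ℝ≥0∞) ^ 2 := tsum_congr fun j => by rw [hr j]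
    rw [e1, e2, two_mul]
  refine ⟨?_, ?_⟩
  · calc ∑' j : J, ENNReal.ofReal (⟪ψt j, ψt j - P₂ (ψt j)⟫).re
        = ∑' j : J, (‖P₂ (Γ (ψt j))‖₊ : ℝ≥0∞) ^ 2 := tsum_congr key2
      _ = S := hS'
  · constructor
    · rintro ⟨ι, b, hsum⟩
      have h1 : ∑' i : ι, (‖T (b i)‖₊ : ℝ≥0∞) ^ 2 = 2 * S := by
        rw [my_sumsq_indep b bt T hsaT, hTsum, hS']
      have h2 : ∑' i : ι, (‖T (b i)‖₊ : ℝ≥0∞) ^ 2 < ⊤ := by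
        have hne : (∑' i : ι, ((‖T (b i)‖₊ ^ 2 : ℝ≥0) : ℝ≥0∞)) ≠ ⊤ := by
          rw [ENNReal.tsum_coe_ne_top_iff_summable]
          exact NNReal.summable_coe.mp (by simpa [NNReal.coe_pow] using hsum)
        have h3 := hne.lt_top
        simpa [ENNReal.coe_pow] using h3
      rw [h1] at h2
      exact lt_of_le_of_lt (le_mul_of_one_le_left zero_le one_le_two) h2
    · intro hS
      obtain ⟨w, b0, hb0⟩ := exists_hilbertBasis ℂ H
      haveI : Countable w := my_countable_of_orthonormal b0.orthonormal
      obtain ⟨f, hf⟩ := exists_injective_nat w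
      set eqv : ↥(Set.range f) ≃ w := (Equiv.ofInjective f hf).symm with heqv
      have h_onκ : Orthonormal ℂ (⇑b0 ∘ eqv) := b0.orthonormal.comp _ eqv.injective
      have h_totκ : ⊤ ≤ (Submodule.span ℂ (Set.range (⇑b0 ∘ eqv))).topologicalClosure := by
        rw [Set.range_comp, eqv.surjective.range_eq, Set.image_univ, b0.dense_span]
      refine ⟨↥(Set.range f), HilbertBasis.mk h_onκ h_totκ, ?_⟩
      have h1 : ∑' i : ↥(Set.range f),
          (‖T ((HilbertBasis.mk h_onκ h_totκ) i)‖₊ : ℝ≥0∞) ^ 2 = 2 * S := by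
        rw [my_sumsq_indep (HilbertBasis.mk h_onκ h_totκ) bt T hsaT, hTsum, hS']
      have h2 : (2 : ℝ≥0∞) * S < ⊤ := ENNReal.mul_lt_top (by simp) hS
      have h3 : (∑' i : ↥(Set.range f),
          ((‖T ((HilbertBasis.mk h_onκ h_totκ) i)‖₊ ^ 2 : ℝ≥0) : ℝ≥0∞)) ≠ ⊤ := by
        simp_rw [ENNReal.coe_pow]
        rw [h1]
        exact h2.ne
      have h4 := ENNReal.tsum_coe_ne_top_iff_summable.mp h3
      have h5 := NNReal.summable_coe.mpr h4
      simpa [NNReal.coe_pow] using h5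
end
end

section
/- Let P₁, P₂ be basis projections on the self-dual Hilbert space (H, Γ), with associated quasi-free states ω_{P₁}, ω_{P₂}, let {ψ̃_j}_{j∈J} be an orthonormal basis of the range of P₁ and {ψ̆_i}_{i∈J} an orthonormal basis of the range of P₂. Then ‖ω_{P₁} − ω_{P₂}‖²_F = 2 Σ_{i,j∈J} |⟨ψ̆_i, Γψ̃_j⟩|², where in computing ‖·‖_F the outer index sum is taken over the orthonormal basis {ψ̆_i} ∪ {Γψ̆_i} of H and the inner index sum over the orthonormal basis {ψ̃_j} ∪ {Γψ̃_j} of H. -/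
open scoped ComplexOrder ComplexInnerProductSpace

noncomputable section

/-- A self-dual CAR algebra structure on a unital C*-algebra `A` over the
self-dual Hilbert space `(H, Γ)`:  `conj` is the antiunitary involution `Γ`
and `B : H → A` are the self-dual CAR generators. -/
structure SelfDualCAR (H A : Type*) [NormedAddCommGroup H] [InnerProductSpace ℂ H]
    [NormedRing A] [StarRing A] [NormedAlgebra ℂ A] where
  conj : H →ₗ⋆[ℂ] H
  conj_conj : ∀ φ : H, conj (conj φ) = φ
  conj_inner : ∀ φ ψ : H, ⟪conj φ, conj ψ⟫ = ⟪ψ, φ⟫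
  B : H → A
  star_B : ∀ φ : H, star (B φ) = B (conj φ)
  B_add : ∀ φ ψ : H, B (φ + ψ) = B φ + B ψ
  B_smul : ∀ (c : ℂ) (φ : H), B (c • φ) = (starRingEnd ℂ c) • B φ
  car_rel : ∀ φ ψ : H, B φ * star (B ψ) + star (B ψ) * B φ = ⟪φ, ψ⟫ • 1

/-- A state on a unital C*-algebra: a normalized positive linear functional. -/
structure CState (A : Type*) [NormedRing A] [StarRing A] [NormedAlgebra ℂ A] where
  val : A →ₗ[ℂ] ℂ
  pos : ∀ a : A, 0 ≤ val (star a * a)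
  unital : val 1 = 1

variable {H A : Type*}

/-- `P` is a basis projection on the self-dual Hilbert space `(H, Γ)`: an
orthogonal projection with `Γ P Γ = 1 - P`. -/
def SelfDualCAR.IsBasisProjection [NormedAddCommGroup H] [InnerProductSpace ℂ H]
    [NormedRing A] [StarRing A] [NormedAlgebra ℂ A]
    (car : SelfDualCAR H A) (P : H →L[ℂ] H) : Prop :=
  (∀ ψ : H, P (P ψ) = P ψ) ∧ (∀ φ ψ : H, ⟪P φ, ψ⟫ = ⟪φ, P ψ⟫) ∧
    (∀ ψ : H, car.conj (P (car.conj ψ)) = ψ - P ψ)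

/-- `ω` is the quasi-free (Fock) state associated with the basis projection `P`,
i.e. the (unique) state whose two-point function is
`ω(B(φ₁)B(φ₂)*) = ⟨φ₁, P φ₂⟩`. -/
def SelfDualCAR.IsQuasiFreeState [NormedAddCommGroup H] [InnerProductSpace ℂ H]
    [NormedRing A] [StarRing A] [NormedAlgebra ℂ A]
    (car : SelfDualCAR H A) (P : H →L[ℂ] H) (ω : CState A) : Prop :=
  ∀ φ ψ : H, ω.val (car.B φ * star (car.B ψ)) = ⟪φ, P ψ⟫

open scoped ENNReal


universe uu

/-- Splitting a `tsum` over a sum type, in `ℝ≥0∞`. -/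
lemma tsum_sum_type_ennreal {α β : Type uu} (f : α ⊕ β → ℝ≥0∞) :
    ∑' x : α ⊕ β, f x = (∑' a : α, f (Sum.inl a)) + ∑' b : β, f (Sum.inr b) := by
  calc ∑' x : α ⊕ β, f x
      = ∑' p : Σ b : Bool, cond b β α, f ((Equiv.sumEquivSigmaBool α β).symm p) :=
        ((Equiv.sumEquivSigmaBool α β).symm.tsum_eq f).symm
    _ = ∑' b : Bool, ∑' x : cond b β α,
          f ((Equiv.sumEquivSigmaBool α β).symm ⟨b, x⟩) := ENNReal.tsum_sigma' _
    _ = (∑' a : α, f (Sum.inl a)) + ∑' b : β, f (Sum.inr b) := by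
        rw [tsum_bool]; rfl

/-- for basis projections `P₁, P₂` with quasi-free states
`ω_{P₁}, ω_{P₂}`, an orthonormal basis `{ψ̃_j}_{j∈J}` of `ran P₁` and an
orthonormal basis `{ψ̆_i}_{i∈J}` of `ran P₂` (so that `{ψ̃_j} ∪ {Γψ̃_j}` and
`{ψ̆_i} ∪ {Γψ̆_i}` are orthonormal bases of `H`),
`‖ω_{P₁} - ω_{P₂}‖²_F = 2 Σ_{i,j} |⟨ψ̆_i, Γψ̃_j⟩|²`, the `F`-norm being computed
with the outer index running over `{ψ̆_i} ∪ {Γψ̆_i}` and the inner index over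
`{ψ̃_j} ∪ {Γψ̃_j}`. -/
theorem fNorm_sq_eq_twice_overlap_sum
    [NormedAddCommGroup H] [InnerProductSpace ℂ H] [CompleteSpace H]
    [TopologicalSpace.SeparableSpace H]
    [NormedRing A] [StarRing A] [CStarRing A] [NormedAlgebra ℂ A] [StarModule ℂ A]
    [CompleteSpace A]
    (car : SelfDualCAR H A) (P₁ P₂ : H →L[ℂ] H)
    (hP₁ : car.IsBasisProjection P₁) (hP₂ : car.IsBasisProjection P₂)
    (ω₁ ω₂ : CState A)
    (hω₁ : car.IsQuasiFreeState P₁ ω₁) (hω₂ : car.IsQuasiFreeState P₂ ω₂)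
    {J : Type*} (ψt ψb : J → H)
    (hψt_fix : ∀ j : J, P₁ (ψt j) = ψt j) (hψb_fix : ∀ j : J, P₂ (ψb j) = ψb j)
    (b₁ : HilbertBasis (J ⊕ J) ℂ H)
    (hb₁l : ∀ j : J, b₁ (Sum.inl j) = ψt j)
    (hb₁r : ∀ j : J, b₁ (Sum.inr j) = car.conj (ψt j))
    (b₂ : HilbertBasis (J ⊕ J) ℂ H)
    (hb₂l : ∀ j : J, b₂ (Sum.inl j) = ψb j)
    (hb₂r : ∀ j : J, b₂ (Sum.inr j) = car.conj (ψb j)) :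
    ∑' p : (J ⊕ J) × (J ⊕ J),
        (‖ω₁.val (car.B (b₂ p.1) * star (car.B (b₁ p.2))) -
            ω₂.val (car.B (b₂ p.1) * star (car.B (b₁ p.2)))‖₊ : ℝ≥0∞) ^ 2 =
      2 * ∑' p : J × J, (‖⟪ψb p.1, car.conj (ψt p.2)⟫‖₊ : ℝ≥0∞) ^ 2 := by
  -- abbreviations
  set G : J ⊕ J → J ⊕ J → ℝ≥0∞ := fun i j =>
    (‖ω₁.val (car.B (b₂ i) * star (car.B (b₁ j))) -
        ω₂.val (car.B (b₂ i) * star (car.B (b₁ j)))‖₊ : ℝ≥0∞) ^ 2 with hG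
  set g : J → J → ℝ≥0∞ := fun i j => (‖⟪ψb i, car.conj (ψt j)⟫‖₊ : ℝ≥0∞) ^ 2 with hg
  -- `P₁` kills `Γ ψt j`, `P₂` kills `Γ ψb i`
  have hP₁Γ : ∀ j : J, P₁ (car.conj (ψt j)) = 0 := by
    intro j
    have h := hP₁.2.2 (ψt j)
    have := congrArg car.conj h
    rw [car.conj_conj] at this
    rw [this, hψt_fix, sub_self, map_zero]
  have hP₂Γ : ∀ i : J, P₂ (car.conj (ψb i)) = 0 := by
    intro i
    have h := hP₂.2.2 (ψb i)
    have := congrArg car.conj h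
    rw [car.conj_conj] at this
    rw [this, hψb_fix, sub_self, map_zero]
  -- the four blocks
  have key1 : ∀ i j : J, G (Sum.inl i) (Sum.inl j) = 0 := by
    intro i j
    have h1 : ω₁.val (car.B (b₂ (Sum.inl i)) * star (car.B (b₁ (Sum.inl j)))) =
        ⟪ψb i, ψt j⟫ := by
      rw [hω₁, hb₂l, hb₁l, hψt_fix]
    have h2 : ω₂.val (car.B (b₂ (Sum.inl i)) * star (car.B (b₁ (Sum.inl j)))) =
        ⟪ψb i, ψt j⟫ := by
      rw [hω₂, hb₂l, hb₁l, ← hP₂.2.1, hψb_fix]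
    simp [hG, h1, h2]
  have key2 : ∀ i j : J, G (Sum.inl i) (Sum.inr j) = g i j := by
    intro i j
    have h1 : ω₁.val (car.B (b₂ (Sum.inl i)) * star (car.B (b₁ (Sum.inr j)))) = 0 := by
      rw [hω₁, hb₂l, hb₁r, hP₁Γ, inner_zero_right]
    have h2 : ω₂.val (car.B (b₂ (Sum.inl i)) * star (car.B (b₁ (Sum.inr j)))) =
        ⟪ψb i, car.conj (ψt j)⟫ := by
      rw [hω₂, hb₂l, hb₁r, ← hP₂.2.1, hψb_fix]
    simp [hG, hg, h1, h2]
  have key3 : ∀ i j : J, G (Sum.inr i) (Sum.inl j) = g i j := by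
    intro i j
    have h1 : ω₁.val (car.B (b₂ (Sum.inr i)) * star (car.B (b₁ (Sum.inl j)))) =
        ⟪car.conj (ψb i), ψt j⟫ := by
      rw [hω₁, hb₂r, hb₁l, hψt_fix]
    have h2 : ω₂.val (car.B (b₂ (Sum.inr i)) * star (car.B (b₁ (Sum.inl j)))) = 0 := by
      rw [hω₂, hb₂r, hb₁l, ← hP₂.2.1, hP₂Γ, inner_zero_left]
    have hflip : ⟪car.conj (ψb i), ψt j⟫ = starRingEnd ℂ ⟪ψb i, car.conj (ψt j)⟫ := by
      have := car.conj_inner (ψb i) (car.conj (ψt j))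
      rw [car.conj_conj] at this
      rw [this, inner_conj_symm]
    have hnn : ‖(⟪car.conj (ψb i), ψt j⟫ : ℂ)‖₊ = ‖(⟪ψb i, car.conj (ψt j)⟫ : ℂ)‖₊ := by
      rw [hflip, RCLike.nnnorm_conj]
    simp [hG, hg, h1, h2, hnn]
  have key4 : ∀ i j : J, G (Sum.inr i) (Sum.inr j) = 0 := by
    intro i j
    have h1 : ω₁.val (car.B (b₂ (Sum.inr i)) * star (car.B (b₁ (Sum.inr j)))) = 0 := by
      rw [hω₁, hb₂r, hb₁r, hP₁Γ, inner_zero_right]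
    have h2 : ω₂.val (car.B (b₂ (Sum.inr i)) * star (car.B (b₁ (Sum.inr j)))) = 0 := by
      rw [hω₂, hb₂r, hb₁r, ← hP₂.2.1, hP₂Γ, inner_zero_left]
    simp [hG, h1, h2]
  -- assemble
  calc ∑' p : (J ⊕ J) × (J ⊕ J), G p.1 p.2
      = ∑' i : J ⊕ J, ∑' j : J ⊕ J, G i j := ENNReal.tsum_prod
    _ = (∑' i : J, ∑' j : J ⊕ J, G (Sum.inl i) j) +
          ∑' i : J, ∑' j : J ⊕ J, G (Sum.inr i) j :=
        tsum_sum_type_ennreal _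
    _ = (∑' i : J, ∑' j : J, g i j) + ∑' i : J, ∑' j : J, g i j := by
        congr 1
        · refine tsum_congr fun i => ?_
          rw [tsum_sum_type_ennreal]
          simp [key1, key2]
        · refine tsum_congr fun i => ?_
          rw [tsum_sum_type_ennreal]
          simp [key3, key4]
    _ = 2 * ∑' p : J × J, g p.1 p.2 := by
        rw [ENNReal.tsum_prod, two_mul]
end
end

section
/- Let P₁, P₂ be basis projections on the self-dual Hilbert space (H, Γ) such that P₁ − P₂ is a Hilbert–Schmidt operator. Then the subspace P₁H ∩ P₂⊥H of H is finite-dimensional. -/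
open scoped ComplexInnerProductSpace
open scoped ENNReal NNReal

noncomputable section

lemma parseval_real {H : Type*} [NormedAddCommGroup H] [InnerProductSpace ℂ H]
    [CompleteSpace H] {ι : Type*} (b : HilbertBasis ι ℂ H) (x : H) :
    ∑' i, ‖⟪b i, x⟫‖ ^ 2 = ‖x‖ ^ 2 := by
  have h := lp.norm_rpow_eq_tsum (p := 2) (by norm_num) (b.repr x)
  simp only [ENNReal.toReal_ofNat, Real.rpow_two, HilbertBasis.repr_apply_apply,
    LinearIsometryEquiv.norm_map] at h
  exact h.symm

lemma parseval_ennreal {H : Type*} [NormedAddCommGroup H] [InnerProductSpace ℂ H]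
    [CompleteSpace H] {ι : Type*} (b : HilbertBasis ι ℂ H) (x : H) :
    ∑' i, ((‖⟪b i, x⟫‖₊ : ℝ≥0∞)) ^ 2 = ((‖x‖₊ : ℝ≥0∞)) ^ 2 := by
  have hs : Summable fun i => ‖⟪b i, x⟫‖ ^ 2 := by
    simpa using b.orthonormal.inner_products_summable (x := x)
  calc ∑' i, ((‖⟪b i, x⟫‖₊ : ℝ≥0∞)) ^ 2
      = ∑' i, ENNReal.ofReal (‖⟪b i, x⟫‖ ^ 2) :=
        tsum_congr fun i => by
          rw [ENNReal.ofReal_pow (norm_nonneg _), ofReal_norm, enorm_eq_nnnorm]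
    _ = ENNReal.ofReal (∑' i, ‖⟪b i, x⟫‖ ^ 2) :=
        (ENNReal.ofReal_tsum_of_nonneg (fun i => by positivity) hs).symm
    _ = ENNReal.ofReal (‖x‖ ^ 2) := by rw [parseval_real]
    _ = ((‖x‖₊ : ℝ≥0∞)) ^ 2 := by
        rw [ENNReal.ofReal_pow (norm_nonneg _), ofReal_norm, enorm_eq_nnnorm]

lemma bessel_ennreal {H : Type*} [NormedAddCommGroup H] [InnerProductSpace ℂ H]
    {κ : Type*} {e : κ → H} (he : Orthonormal ℂ e) (y : H) :
    ∑' n, ((‖⟪e n, y⟫‖₊ : ℝ≥0∞)) ^ 2 ≤ ((‖y‖₊ : ℝ≥0∞)) ^ 2 := by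
  have hs : Summable fun n => ‖⟪e n, y⟫‖ ^ 2 := by
    simpa using he.inner_products_summable (x := y)
  calc ∑' n, ((‖⟪e n, y⟫‖₊ : ℝ≥0∞)) ^ 2
      = ∑' n, ENNReal.ofReal (‖⟪e n, y⟫‖ ^ 2) :=
        tsum_congr fun n => by
          rw [ENNReal.ofReal_pow (norm_nonneg _), ofReal_norm, enorm_eq_nnnorm]
    _ = ENNReal.ofReal (∑' n, ‖⟪e n, y⟫‖ ^ 2) :=
        (ENNReal.ofReal_tsum_of_nonneg (fun i => by positivity) hs).symm
    _ ≤ ENNReal.ofReal (‖y‖ ^ 2) := ENNReal.ofReal_le_ofReal (he.tsum_inner_products_le (x := y))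
    _ = ((‖y‖₊ : ℝ≥0∞)) ^ 2 := by
        rw [ENNReal.ofReal_pow (norm_nonneg _), ofReal_norm, enorm_eq_nnnorm]

lemma hs_no_fixed_on {H : Type*} [NormedAddCommGroup H] [InnerProductSpace ℂ H]
    [CompleteSpace H] (T : H →L[ℂ] H) (hHS : IsHilbertSchmidt T)
    (e : ℕ → H) (he : Orthonormal ℂ e) (hfix : ∀ n, T (e n) = e n) : False := by
  obtain ⟨ι, b, hb⟩ := hHS
  set S := ContinuousLinearMap.adjoint T with hS
  -- total HS "norm" of adjoint is finite
  have hfin : ∑' i, ((‖S (b i)‖₊ : ℝ≥0∞)) ^ 2 ≠ ⊤ := by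
    have h1 : ∀ i, ((‖S (b i)‖₊ : ℝ≥0∞)) ^ 2 = ∑' j, ((‖⟪b j, S (b i)⟫‖₊ : ℝ≥0∞)) ^ 2 :=
      fun i => (parseval_ennreal b _).symm
    have h2 : ∀ i j, (‖⟪b j, S (b i)⟫‖₊ : ℝ≥0∞) = (‖⟪b i, T (b j)⟫‖₊ : ℝ≥0∞) := by
      intro i j
      have h : (⟪b j, S (b i)⟫ : ℂ) = starRingEnd ℂ ⟪b i, T (b j)⟫ := by
        rw [← inner_conj_symm, ContinuousLinearMap.adjoint_inner_left]
      rw [h, RCLike.nnnorm_conj]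
    have h3 : ∑' i, ((‖S (b i)‖₊ : ℝ≥0∞)) ^ 2
        = ∑' j, ((‖T (b j)‖₊ : ℝ≥0∞)) ^ 2 := by
      calc ∑' i, ((‖S (b i)‖₊ : ℝ≥0∞)) ^ 2
          = ∑' i, ∑' j, ((‖⟪b i, T (b j)⟫‖₊ : ℝ≥0∞)) ^ 2 := by
            simp only [h1]; congr 1; ext i; congr 1; ext j; rw [h2]
        _ = ∑' j, ∑' i, ((‖⟪b i, T (b j)⟫‖₊ : ℝ≥0∞)) ^ 2 := ENNReal.tsum_comm
        _ = ∑' j, ((‖T (b j)‖₊ : ℝ≥0∞)) ^ 2 := by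
            congr 1; ext j; exact parseval_ennreal b _
    rw [h3]
    have : ∑' j, ((‖T (b j)‖₊ : ℝ≥0∞)) ^ 2 = ENNReal.ofReal (∑' j, ‖T (b j)‖ ^ 2) := by
      rw [ENNReal.ofReal_tsum_of_nonneg (fun i => by positivity) hb]
      simp [ENNReal.ofReal_pow (norm_nonneg _), ofReal_norm, enorm_eq_nnnorm]
    rw [this]
    exact ENNReal.ofReal_ne_top
  -- but the double sum is infinite
  have htop : (⊤ : ℝ≥0∞) ≤ ∑' i, ((‖S (b i)‖₊ : ℝ≥0∞)) ^ 2 := by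
    have h4 : ∀ n, ∑' i, ((‖⟪b i, T (e n)⟫‖₊ : ℝ≥0∞)) ^ 2 = 1 := by
      intro n
      rw [parseval_ennreal b, hfix n]
      have : ‖e n‖₊ = 1 := by
        ext; simpa using he.1 n
      simp [this]
    calc (⊤ : ℝ≥0∞) = ∑' _ : ℕ, (1 : ℝ≥0∞) :=
        (ENNReal.tsum_const_eq_top_of_ne_zero one_ne_zero).symm
      _ = ∑' n, ∑' i, ((‖⟪b i, T (e n)⟫‖₊ : ℝ≥0∞)) ^ 2 := by
          congr 1; ext n; exact (h4 n).symm
      _ = ∑' i, ∑' n, ((‖⟪b i, T (e n)⟫‖₊ : ℝ≥0∞)) ^ 2 := ENNReal.tsum_comm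
      _ ≤ ∑' i, ((‖S (b i)‖₊ : ℝ≥0∞)) ^ 2 := by
          refine ENNReal.tsum_le_tsum fun i => ?_
          have h5 : ∀ n, (‖⟪b i, T (e n)⟫‖₊ : ℝ≥0∞) = (‖⟪e n, S (b i)⟫‖₊ : ℝ≥0∞) := by
            intro n
            have h : (⟪b i, T (e n)⟫ : ℂ) = starRingEnd ℂ ⟪e n, S (b i)⟫ := by
              rw [inner_conj_symm, hS, ContinuousLinearMap.adjoint_inner_left]
            rw [h, RCLike.nnnorm_conj]
          calc ∑' n, ((‖⟪b i, T (e n)⟫‖₊ : ℝ≥0∞)) ^ 2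
              = ∑' n, ((‖⟪e n, S (b i)⟫‖₊ : ℝ≥0∞)) ^ 2 := by
                congr 1; ext n; rw [h5]
            _ ≤ ((‖S (b i)‖₊ : ℝ≥0∞)) ^ 2 := bessel_ennreal he _
  exact hfin (top_le_iff.mp htop)


/-- if `P₁, P₂` are basis projections on the self-dual Hilbert
space `(H, Γ)` with `P₁ - P₂` Hilbert--Schmidt, then the subspace
`P₁H ∩ P₂⊥H` is finite dimensional. -/
theorem inter_finiteDimensional_of_hs
    {H : Type*} [NormedAddCommGroup H] [InnerProductSpace ℂ H] [CompleteSpace H]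
    [TopologicalSpace.SeparableSpace H]
    (Γ : H →ₗ⋆[ℂ] H)
    (hΓΓ : ∀ φ : H, Γ (Γ φ) = φ)
    (hΓinner : ∀ φ ψ : H, ⟪Γ φ, Γ ψ⟫ = ⟪ψ, φ⟫)
    (P₁ P₂ : H →L[ℂ] H)
    (hidem₁ : ∀ ψ : H, P₁ (P₁ ψ) = P₁ ψ)
    (hsa₁ : ∀ φ ψ : H, ⟪P₁ φ, ψ⟫ = ⟪φ, P₁ ψ⟫)
    (hbp₁ : ∀ ψ : H, Γ (P₁ (Γ ψ)) = ψ - P₁ ψ)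
    (hidem₂ : ∀ ψ : H, P₂ (P₂ ψ) = P₂ ψ)
    (hsa₂ : ∀ φ ψ : H, ⟪P₂ φ, ψ⟫ = ⟪φ, P₂ ψ⟫)
    (hbp₂ : ∀ ψ : H, Γ (P₂ (Γ ψ)) = ψ - P₂ ψ)
    (hHS : IsHilbertSchmidt (P₁ - P₂)) :
    FiniteDimensional ℂ
      ↥(LinearMap.range (P₁ : H →ₗ[ℂ] H) ⊓
        LinearMap.range ((1 - P₂ : H →L[ℂ] H) : H →ₗ[ℂ] H)) := by
  by_contra hfd
  set V : Submodule ℂ H := LinearMap.range (P₁ : H →ₗ[ℂ] H) ⊓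
        LinearMap.range ((1 - P₂ : H →L[ℂ] H) : H →ₗ[ℂ] H) with hV
  haveI : Infinite ↥(Module.Basis.ofVectorSpaceIndex ℂ ↥V) := by
    by_contra h
    rw [not_infinite_iff_finite] at h
    haveI := Fintype.ofFinite ↥(Module.Basis.ofVectorSpaceIndex ℂ ↥V)
    exact hfd (Module.Finite.of_basis (Module.Basis.ofVectorSpace ℂ ↥V))
  let em := Infinite.natEmbedding ↥(Module.Basis.ofVectorSpaceIndex ℂ ↥V)
  let f : ℕ → ↥V := fun n => Module.Basis.ofVectorSpace ℂ ↥V (em n)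
  have hfli : LinearIndependent ℂ f :=
    (Module.Basis.ofVectorSpace ℂ ↥V).linearIndependent.comp em em.injective
  let g : ℕ → H := fun n => (f n : H)
  have hgli : LinearIndependent ℂ g := hfli.map' V.subtype (Submodule.ker_subtype V)
  let e := InnerProductSpace.gramSchmidtNormed ℂ g
  have he : Orthonormal ℂ e := InnerProductSpace.gramSchmidtNormed_orthonormal hgli
  have heV : ∀ n, e n ∈ V := by
    intro n
    have h1 : e n ∈ Submodule.span ℂ (InnerProductSpace.gramSchmidtNormed ℂ g '' Set.Iic n) :=
      Submodule.subset_span ⟨n, Set.mem_Iic.2 le_rfl, rfl⟩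
    rw [InnerProductSpace.span_gramSchmidtNormed, InnerProductSpace.span_gramSchmidt_Iic] at h1
    refine Submodule.span_le.2 ?_ h1
    rintro x ⟨m, _, rfl⟩
    exact (f m).2
  have hfix : ∀ n, (P₁ - P₂) (e n) = e n := by
    intro n
    obtain ⟨h1, h2⟩ := Submodule.mem_inf.1 (heV n)
    obtain ⟨y, hy⟩ := h1
    obtain ⟨z, hz⟩ := h2
    have hp1 : P₁ (e n) = e n := by
      rw [← hy]
      exact hidem₁ y
    have hp2 : P₂ (e n) = 0 := by
      rw [← hz]
      show P₂ ((1 - P₂ : H →L[ℂ] H) z) = 0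
      simp only [ContinuousLinearMap.sub_apply, ContinuousLinearMap.one_apply, map_sub]
      rw [hidem₂, sub_self]
    simp [ContinuousLinearMap.sub_apply, hp1, hp2]
  exact hs_no_fixed_on (P₁ - P₂) hHS e he hfix
end
end
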